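/- Let P be a poset such that mxl(P), the set of maximal elements, is a cutset of P (equivalently, every element of P lies below some maximal element), and suppose every C ∈ Γ(P, mxl(P)) has a maximum element. Let P₀ = {max C | C ∈ Γ(P, mxl(P))} with the induced order, and i : P₀ → P the inclusion. Then there exists an order-preserving retraction r : P → P₀ with r∘i = id and i∘r ≥ id_P. In particular, P₀ is a strong deformation retract of P. -/

import Mathlib

/-- The star of an element: all elements comparable to `a`. -/
def starOf {α : Type*} [PartialOrder α] (a : α) : Set α := {x | x ≤ a ∨ a ≤ x}

/-- The star of a subset: elements comparable to every element of `A`. -/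
def starSetOf {α : Type*} [PartialOrder α] (A : Set α) : Set α := ⋂ a ∈ A, starOf a

/-- A subset is astral if it is contained in the star of some element. -/
def IsAstral {α : Type*} [PartialOrder α] (A : Set α) : Prop := ∃ x : α, A ⊆ starOf x

/-- One step of the comparability relation inside a subposet `S`. -/
def CompStep {α : Type*} [PartialOrder α] (S : Set α) (x y : α) : Prop :=
  x ∈ S ∧ y ∈ S ∧ (x ≤ y ∨ y ≤ x)

/-- `x` and `y` are connected inside the subposet `S`. -/
def ConnIn {α : Type*} [PartialOrder α] (S : Set α) (x y : α) : Prop :=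
  Relation.ReflTransGen (CompStep S) x y

/-- A subposet is connected (as a subposet, via comparability). -/
def IsConnSub {α : Type*} [PartialOrder α] (S : Set α) : Prop :=
  S.Nonempty ∧ ∀ x ∈ S, ∀ y ∈ S, ConnIn S x y

/-- The connected component of `x` in the subposet `S`. -/
def compOf {α : Type*} [PartialOrder α] (S : Set α) (x : α) : Set α :=
  {y | y ∈ S ∧ ConnIn S x y}

/-- `C` is a connected component of the subposet `S`. -/
def IsCompOf {α : Type*} [PartialOrder α] (S C : Set α) : Prop :=
  ∃ x ∈ S, C = compOf S x

/-- The crosscut poset `Γ(P,X)`: connected components of the nonempty `st(A)`, `∅ ≠ A ⊆ X`. -/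
def crosscutPoset {α : Type*} [PartialOrder α] (X : Set α) : Set (Set α) :=
  {C | ∃ A : Set α, A.Nonempty ∧ A ⊆ X ∧ IsCompOf (starSetOf A) C}

/-- The subposet `Γ_f(P,X)` coming from finite subsets `A ⊆ X`. -/
def crosscutPosetF {α : Type*} [PartialOrder α] (X : Set α) : Set (Set α) :=
  {C | ∃ A : Set α, A.Nonempty ∧ A.Finite ∧ A ⊆ X ∧ IsCompOf (starSetOf A) C}

/-- `X` is a cutset: every finite chain extends to a chain by an element of `X`. -/
def IsCutset {α : Type*} [PartialOrder α] (X : Set α) : Prop :=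
  ∀ σ : Set α, σ.Finite → IsChain (· ≤ ·) σ → ∃ a ∈ X, IsChain (· ≤ ·) (insert a σ)

/-- A subset `X` is coherent: every finite nonempty bounded subset of `X` has a meet or a join. -/
def IsCoherent {α : Type*} [PartialOrder α] (X : Set α) : Prop :=
  ∀ A ⊆ X, A.Finite → A.Nonempty → (BddAbove A ∨ BddBelow A) →
    (∃ z, IsGLB A z) ∨ (∃ z, IsLUB A z)

/-- The simplices of the crosscut complex `Γ_C(P,X)`: nonempty finite astral subsets of `X`. -/
def IsCCSimplex {α : Type*} [PartialOrder α] (X σ : Set α) : Prop :=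
  σ ⊆ X ∧ σ.Finite ∧ σ.Nonempty ∧ IsAstral σ

/-- `I_X(D) = {x ∈ X | D ⊆ st(x)}`. -/
def astralIdx {α : Type*} [PartialOrder α] (X D : Set α) : Set α :=
  {x ∈ X | D ⊆ starOf x}

/-- The set of maximal elements of a poset. -/
def mxlSet (α : Type*) [PartialOrder α] : Set α := {a | ∀ b, a ≤ b → b = a}

/-- The set of minimal elements of a poset. -/
def mnlSet (α : Type*) [PartialOrder α] : Set α := {a | ∀ b, b ≤ a → b = a}

/-- Type synonym carrying the Alexandroff topology (down-sets are open) of a preorder. -/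
def AlexSp (β : Type*) := β

instance {β : Type*} [Preorder β] : Preorder (AlexSp β) := inferInstanceAs (Preorder β)
instance {β : Type*} [PartialOrder β] : PartialOrder (AlexSp β) :=
  inferInstanceAs (PartialOrder β)

instance {β : Type*} [Preorder β] : TopologicalSpace (AlexSp β) where
  IsOpen U := IsLowerSet U
  isOpen_univ := isLowerSet_univ
  isOpen_inter _ _ h₁ h₂ := h₁.inter h₂
  isOpen_sUnion _ h := isLowerSet_sUnion h


lemma connIn_mono' {α : Type*} [PartialOrder α] {S T : Set α} (h : S ⊆ T) {x y : α}
    (hc : ConnIn S x y) : ConnIn T x y :=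
  Relation.ReflTransGen.mono (fun a b hab => ⟨h hab.1, h hab.2.1, hab.2.2⟩) _ _ hc

lemma connIn_symm' {α : Type*} [PartialOrder α] {S : Set α} {x y : α}
    (hc : ConnIn S x y) : ConnIn S y x :=
  (@Relation.ReflTransGen.stdSymm _ _ ⟨fun _ _ hab => ⟨hab.2.1, hab.1, hab.2.2.symm⟩⟩).symm _ _ hc

lemma starSetOf_anti' {α : Type*} [PartialOrder α] {A B : Set α} (h : A ⊆ B) :
    starSetOf B ⊆ starSetOf A := by
  intro z hz
  simp only [starSetOf, Set.mem_iInter] at *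
  exact fun a ha => hz a (h ha)

/-- If every element of `P` lies below a maximal element and every `C ∈ Γ(P, mxl P)` has a
maximum, then `P₀ = {max C | C ∈ Γ(P, mxl P)}` is a retract of `P` via a monotone
retraction `r` with `i ∘ r ≥ id`. -/
theorem stmt_11 {α : Type*} [PartialOrder α]
    (hmx : ∀ x : α, ∃ a ∈ mxlSet α, x ≤ a)
    (hmax : ∀ C ∈ crosscutPoset (mxlSet α), ∃ m, IsGreatest C m) :
    ∃ r : α → α, Monotone r ∧
      (∀ x, r x ∈ {z | ∃ C ∈ crosscutPoset (mxlSet α), IsGreatest C z}) ∧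
      (∀ x ∈ {z | ∃ C ∈ crosscutPoset (mxlSet α), IsGreatest C z}, r x = x) ∧
      ∀ x, x ≤ r x := by
  classical
  set A : α → Set α := fun x => {a | a ∈ mxlSet α ∧ x ≤ a} with hA
  have hAne : ∀ x, (A x).Nonempty := fun x => by
    obtain ⟨a, ha, hx⟩ := hmx x; exact ⟨a, ha, hx⟩
  have hAsub : ∀ x, A x ⊆ mxlSet α := fun x a ha => ha.1
  have hxS : ∀ x, x ∈ starSetOf (A x) := fun x => by
    simp only [starSetOf, Set.mem_iInter]
    exact fun a ha => Or.inl ha.2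
  have hCmem : ∀ x, compOf (starSetOf (A x)) x ∈ crosscutPoset (mxlSet α) :=
    fun x => ⟨A x, hAne x, hAsub x, x, hxS x, rfl⟩
  choose r hr using fun x => hmax _ (hCmem x)
  have hxC : ∀ x, x ∈ compOf (starSetOf (A x)) x := fun x => ⟨hxS x, .refl⟩
  have hle : ∀ x, x ≤ r x := fun x => (hr x).2 (hxC x)
  refine ⟨r, ?_, fun x => ⟨_, hCmem x, hr x⟩, ?_, hle⟩
  · intro x y hxy
    have hAyx : A y ⊆ A x := fun a ha => ⟨ha.1, hxy.trans ha.2⟩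
    have hS : starSetOf (A x) ⊆ starSetOf (A y) := starSetOf_anti' hAyx
    have hxSy : x ∈ starSetOf (A y) := by
      simp only [starSetOf, Set.mem_iInter]
      exact fun a ha => Or.inl (hxy.trans ha.2)
    obtain ⟨hmem, hconn⟩ := (hr x).1
    have step : ConnIn (starSetOf (A y)) y x :=
      Relation.ReflTransGen.single ⟨hxS y, hxSy, Or.inr hxy⟩
    have : r x ∈ compOf (starSetOf (A y)) y :=
      ⟨hS hmem, step.trans (connIn_mono' hS hconn)⟩
    exact (hr y).2 this
  · rintro x ⟨C, ⟨A₀, hA₀ne, hA₀sub, x₀, hx₀, hCeq⟩, hxg⟩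
    have hxC' : x ∈ C := hxg.1
    have hxst : x ∈ starSetOf A₀ := by
      rw [hCeq] at hxC'; exact hxC'.1
    have hA₀sub' : A₀ ⊆ A x := by
      intro a ha
      have h1 : x ∈ starOf a := by
        simp only [starSetOf, Set.mem_iInter] at hxst
        exact hxst a ha
      rcases h1 with h | h
      · exact ⟨hA₀sub ha, h⟩
      · exact ⟨hA₀sub ha, (hA₀sub ha x h) ▸ le_refl x⟩
    have hS : starSetOf (A x) ⊆ starSetOf A₀ := starSetOf_anti' hA₀sub'
    obtain ⟨hmem, hconn⟩ := (hr x).1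
    have hconn₀ : ConnIn (starSetOf A₀) x₀ (r x) := by
      have hx₀x : ConnIn (starSetOf A₀) x₀ x := by
        rw [hCeq] at hxC'; exact hxC'.2
      exact hx₀x.trans (connIn_mono' hS hconn)
    have hrC : r x ∈ C := by rw [hCeq]; exact ⟨hS hmem, hconn₀⟩
    exact le_antisymm (hxg.2 hrC) (hle x)
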